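/- Let Γ(t), 0 ≤ t ≤ T, be a sufficiently smooth moving boundary in ℝ², σ a continuous density on the space-time boundary Γ_T, and δ > 0. For t ≥ 2δ, define the far-history function u_FH(x, t+δ) = S_FH[σ](x, t+δ) = ∫₀^{t−δ} ∫_{Γ(τ)} G(x−y, t+δ−τ) σ(y,τ) ds_y dτ. Then u_FH(x, t+δ) = ∫_{ℝ²} G(x−z, δ) [u_FH(z, t) + S_NH[σ](z, t)] dz for all x ∈ ℝ², where S_NH[σ](z,t) = ∫_{t−2δ}^{t−δ} ∫_{Γ(τ)} G(z−y, t−τ) σ(y,τ) ds_y dτ. -/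

import Mathlib

noncomputable section

open MeasureTheory Filter Topology

/-- The plane `ℝ²`. -/
abbrev E2 : Type := EuclideanSpace ℝ (Fin 2)

/-- The free-space heat kernel in two space dimensions,
`G(x,t) = e^{−‖x‖²/(4t)}/(4πt)`. -/
def heatKernel (x : E2) (t : ℝ) : ℝ :=
  Real.exp (-‖x‖ ^ 2 / (4 * t)) / (4 * Real.pi * t)

/-- A *sufficiently smooth moving boundary* in the plane: for every time `t`,
`Γ(t) = frontier (Ω t)` is the boundary of a bounded open domain `Ω t`; it is a
closed `C²` curve (hence with continuous curvature), parametrized by arc length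
by `γ t : ℝ → ℝ²` (periodic with period the length of the curve), jointly
continuous in space-time and evolving with a continuous velocity, with outward
unit normal `ν t y` at `y ∈ Γ(t)`. -/
structure SmoothMovingBoundary where
  /-- the moving domain -/
  Ω : ℝ → Set E2
  /-- arc-length parametrization of `Γ(t) = frontier (Ω t)` -/
  γ : ℝ → ℝ → E2
  /-- the length of the curve `Γ(t)` -/
  len : ℝ → ℝ
  /-- outward unit normal to `Γ(t)` -/
  ν : ℝ → E2 → E2
  isOpen : ∀ t, IsOpen (Ω t)
  bounded : ∀ t, Bornology.IsBounded (Ω t)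
  len_pos : ∀ t, 0 < len t
  len_cont : Continuous len
  periodic : ∀ t s, γ t (s + len t) = γ t s
  image_eq : ∀ t, frontier (Ω t) = Set.range (γ t)
  contDiff_space : ∀ t, ContDiff ℝ 2 (γ t)
  arclength : ∀ t s, ‖deriv (γ t) s‖ = 1
  joint_cont : Continuous (Function.uncurry γ)
  velocity_cont : Continuous fun p : ℝ × ℝ => deriv (fun u => γ u p.2) p.1
  normal_unit : ∀ t s, ‖ν t (γ t s)‖ = 1
  normal_orth : ∀ t s, inner ℝ (ν t (γ t s)) (deriv (γ t) s) = (0 : ℝ)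
  normal_outward : ∀ t s, ∀ᶠ ε in 𝓝[>] (0 : ℝ),
    γ t s + ε • ν t (γ t s) ∉ closure (Ω t)

namespace SmoothMovingBoundary

/-- The line integral `∫_{Γ(τ)} f(y) ds_y` with respect to arc length. -/
def curveIntegral (B : SmoothMovingBoundary) (τ : ℝ) (f : E2 → ℝ) : ℝ :=
  ∫ s in Set.Ioc 0 (B.len τ), f (B.γ τ s)

/-- The single layer heat potential
`S[σ](x,t) = ∫₀ᵗ ∫_{Γ(τ)} G(x−y,t−τ) σ(y,τ) ds_y dτ`. -/
def singleLayer (B : SmoothMovingBoundary) (σ : E2 → ℝ → ℝ) (x : E2) (t : ℝ) : ℝ :=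
  ∫ τ in Set.Ioc 0 t, B.curveIntegral τ fun y => heatKernel (x - y) (t - τ) * σ y τ

/-- The space-time boundary `Γ_T = ∏_{0}^{T} Γ(t)` viewed as a subset of `ℝ² × ℝ`. -/
def spaceTimeBoundary (B : SmoothMovingBoundary) (T : ℝ) : Set (E2 × ℝ) :=
  {p | p.2 ∈ Set.Icc 0 T ∧ p.1 ∈ frontier (B.Ω p.2)}

end SmoothMovingBoundary

/-- The kernel `∂/∂ν_y G(x−y,s) = ⟪ν_y, (x−y)/(2s)⟫ G(x−y,s)` of the double
layer heat potential, where `n` is the (outward) unit normal at `y`. -/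
def dlKernel (n : E2) (x y : E2) (s : ℝ) : ℝ :=
  ((inner ℝ n (x - y) : ℝ) / (2 * s)) * heatKernel (x - y) s

/-- The double layer heat potential
`D[μ](x,t) = ∫₀ᵗ ∫_{Γ(τ)} (∂/∂ν_y) G(x−y,t−τ) μ(y,τ) ds_y dτ`. -/
def SmoothMovingBoundary.doubleLayer (B : SmoothMovingBoundary) (μ : E2 → ℝ → ℝ)
    (x : E2) (t : ℝ) : ℝ :=
  ∫ τ in Set.Ioc 0 t, B.curveIntegral τ fun y => dlKernel (B.ν τ y) x y (t - τ) * μ y τ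

/-- A density which is continuous on the space-time boundary `Γ_T`. -/
def ContinuousDensity (B : SmoothMovingBoundary) (T : ℝ) (σ : E2 → ℝ → ℝ) : Prop :=
  ContinuousOn (fun p : E2 × ℝ => σ p.1 p.2) (B.spaceTimeBoundary T)

/-- The Laplacian `Δf(x) = ∑ᵢ ∂²f/∂xᵢ²` of a function on the plane. -/
def laplacian2 (f : E2 → ℝ) (x : E2) : ℝ :=
  ∑ i : Fin 2, fderiv ℝ (fun y => fderiv ℝ f y (EuclideanSpace.single i (1 : ℝ))) x
    (EuclideanSpace.single i (1 : ℝ))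

/-- The one-dimensional Hermite functions `h_n(x) = (−1)ⁿ (dⁿ/dxⁿ) e^{−x²}`. -/
def hermiteFun (n : ℕ) (x : ℝ) : ℝ :=
  (-1 : ℝ) ^ n * (deriv^[n] fun y : ℝ => Real.exp (-y ^ 2)) x

/-- Two-dimensional Hermite functions `h_α(x) = h_{α₁}(x₁) h_{α₂}(x₂)`. -/
def hermiteFun2 (α : ℕ × ℕ) (x : E2) : ℝ :=
  hermiteFun α.1 (x 0) * hermiteFun α.2 (x 1)

/-- The exponential integral of order 3/2, `E_{3/2}(x) = ∫₁^∞ e^{−xt} t^{−3/2} dt`. -/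
def expInt32 (x : ℝ) : ℝ :=
  ∫ u in Set.Ioi (1 : ℝ), Real.exp (-x * u) / u ^ ((3 : ℝ) / 2)

/-- The complementary error function `erfc(x) = (2/√π) ∫ₓ^∞ e^{−t²} dt`. -/
def erfc (x : ℝ) : ℝ :=
  2 / Real.sqrt Real.pi * ∫ u in Set.Ioi x, Real.exp (-u ^ 2)


section Helpers

lemma integrable_gauss2 {b : ℝ} (hb : 0 < b) :
    Integrable fun v : E2 => Real.exp (-b * ‖v‖ ^ 2) := by
  have h := (GaussianFourier.integrable_cexp_neg_mul_sq_norm_add (V := E2) (b := (b : ℂ))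
    (by simpa using hb) 0 0).norm
  apply h.congr
  filter_upwards with v
  rw [Complex.norm_exp]
  norm_num
  left
  norm_cast

lemma integral_gauss2 {b : ℝ} (hb : 0 < b) :
    ∫ v : E2, Real.exp (-b * ‖v‖ ^ 2) = Real.pi / b := by
  rw [GaussianFourier.integral_rexp_neg_mul_sq_norm hb]
  have : (Module.finrank ℝ E2 : ℝ) = 2 := by
    simp [finrank_euclideanSpace]
  rw [this]
  norm_num

lemma gauss_conv {a b : ℝ} (ha : 0 < a) (hb : 0 < b) (x y : E2) :
    ∫ z : E2, Real.exp (-a * ‖x - z‖ ^ 2) * Real.exp (-b * ‖z - y‖ ^ 2)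
      = Real.pi / (a + b) * Real.exp (-(a * b / (a + b)) * ‖x - y‖ ^ 2) := by
  have hab : 0 < a + b := by linarith
  set c : E2 := (a / (a + b)) • x + (b / (a + b)) • y with hc
  have key : ∀ z : E2, -a * ‖x - z‖ ^ 2 + -b * ‖z - y‖ ^ 2
      = -(a + b) * ‖z - c‖ ^ 2 + -(a * b / (a + b)) * ‖x - y‖ ^ 2 := by
    intro z
    simp only [hc, ← real_inner_self_eq_norm_sq, inner_sub_left, inner_sub_right,
      inner_add_left, inner_add_right, real_inner_smul_left, real_inner_smul_right]
    rw [real_inner_comm z x, real_inner_comm y x, real_inner_comm z y]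
    field_simp
    ring
  have h1 : ∀ z : E2, Real.exp (-a * ‖x - z‖ ^ 2) * Real.exp (-b * ‖z - y‖ ^ 2)
      = Real.exp (-(a + b) * ‖z - c‖ ^ 2) * Real.exp (-(a * b / (a + b)) * ‖x - y‖ ^ 2) := by
    intro z
    rw [← Real.exp_add, ← Real.exp_add, key z]
  simp only [h1]
  rw [integral_mul_const]
  have h2 : ∫ z : E2, Real.exp (-(a + b) * ‖z - c‖ ^ 2)
      = ∫ z : E2, Real.exp (-(a + b) * ‖z‖ ^ 2) := by
    exact integral_sub_right_eq_self (fun z => Real.exp (-(a + b) * ‖z‖ ^ 2)) c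
  rw [h2, integral_gauss2 hab]

lemma heatKernel_conv {δ s : ℝ} (hδ : 0 < δ) (hs : 0 < s) (x y : E2) :
    ∫ z : E2, heatKernel (x - z) δ * heatKernel (z - y) s = heatKernel (x - y) (δ + s) := by
  have hδs : 0 < δ + s := by linarith
  have ha : 0 < 1 / (4 * δ) := by positivity
  have hb : 0 < 1 / (4 * s) := by positivity
  have h1 : ∀ z : E2, heatKernel (x - z) δ * heatKernel (z - y) s
      = Real.exp (-(1 / (4 * δ)) * ‖x - z‖ ^ 2) * Real.exp (-(1 / (4 * s)) * ‖z - y‖ ^ 2)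
        * (1 / (4 * Real.pi * δ * (4 * Real.pi * s))) := by
    intro z
    unfold heatKernel
    rw [div_mul_div_comm]
    ring_nf
  simp only [h1]
  rw [integral_mul_const, gauss_conv ha hb]
  rw [show 1 / (4 * δ) * (1 / (4 * s)) / (1 / (4 * δ) + 1 / (4 * s)) = 1 / (4 * (δ + s)) from by
    field_simp; ring]
  rw [show -(1 / (4 * (δ + s))) * ‖x - y‖ ^ 2 = -‖x - y‖ ^ 2 / (4 * (δ + s)) from by ring]
  unfold heatKernel
  rw [mul_right_comm, show Real.pi / (1 / (4 * δ) + 1 / (4 * s)) * (1 / (4 * Real.pi * δ * (4 * Real.pi * s)))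
      = 1 / (4 * Real.pi * (δ + s)) from by
    rw [div_add_div _ _ (by positivity) (by positivity)]
    rw [div_div_eq_mul_div]
    field_simp
    ring, one_div, inv_mul_eq_div]

lemma heatKernel_pos {r : ℝ} (hr : 0 < r) (w : E2) : 0 < heatKernel w r := by
  unfold heatKernel
  positivity

lemma heatKernel_nonneg {r : ℝ} (hr : 0 < r) (w : E2) : 0 ≤ heatKernel w r :=
  (heatKernel_pos hr w).le

lemma heatKernel_le {r δ : ℝ} (hδ : 0 < δ) (hr : δ ≤ r) (w : E2) :
    heatKernel w r ≤ 1 / (4 * Real.pi * δ) := by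
  have hr0 : 0 < r := lt_of_lt_of_le hδ hr
  unfold heatKernel
  have h1 : Real.exp (-‖w‖ ^ 2 / (4 * r)) ≤ 1 := by
    rw [Real.exp_le_one_iff]
    have : 0 ≤ ‖w‖ ^ 2 := by positivity
    have : 0 < 4 * r := by linarith
    apply div_nonpos_of_nonpos_of_nonneg <;> [skip; linarith]
    simp [sq_nonneg]
  calc Real.exp (-‖w‖ ^ 2 / (4 * r)) / (4 * Real.pi * r)
      ≤ 1 / (4 * Real.pi * r) := by
        apply div_le_div_of_nonneg_right h1 (by positivity) |>.trans_eq rfl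
    _ ≤ 1 / (4 * Real.pi * δ) := by
        apply one_div_le_one_div_of_le (by positivity)
        nlinarith [Real.pi_pos]

lemma integrable_heatKernel {δ : ℝ} (hδ : 0 < δ) (x : E2) :
    Integrable (fun z : E2 => heatKernel (x - z) δ) := by
  have h : ∀ z : E2, heatKernel (x - z) δ
      = Real.exp (-(1 / (4 * δ)) * ‖x - z‖ ^ 2) * (1 / (4 * Real.pi * δ)) := by
    intro z
    unfold heatKernel
    rw [div_eq_mul_one_div]
    ring_nf
  simp only [h]
  apply Integrable.mul_const
  exact (integrable_comp_sub_left (fun w : E2 => Real.exp (-(1 / (4 * δ)) * ‖w‖ ^ 2)) x).2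
    (integrable_gauss2 (by positivity))

lemma measurable_heatKernel_comp {α : Type*} [MeasurableSpace α] {w : α → E2} {r : α → ℝ}
    (hw : Measurable w) (hr : Measurable r) :
    Measurable (fun a => heatKernel (w a) (r a)) := by
  unfold heatKernel
  have h1 : Measurable fun a => -‖w a‖ ^ 2 / (4 * r a) :=
    ((hw.norm.pow_const 2).neg).div (hr.const_mul 4)
  exact (Real.measurable_exp.comp h1).div (hr.const_mul (4 * Real.pi))

def indf (L' : ℝ) (s : ℝ) : ℝ := (Set.Ioc 0 L').indicator (fun _ => (1 : ℝ)) s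

lemma indf_nonneg (L' s : ℝ) : 0 ≤ indf L' s := by
  unfold indf; by_cases h : s ∈ Set.Ioc 0 L' <;> simp [h]

lemma indf_le_one (L' s : ℝ) : indf L' s ≤ 1 := by
  unfold indf; by_cases h : s ∈ Set.Ioc 0 L' <;> simp [h]

lemma indf_meas {g : ℝ → ℝ} (hg : Continuous g) :
    Measurable fun p : ℝ × ℝ => indf (g p.1) p.2 := by
  have h : (fun p : ℝ × ℝ => indf (g p.1) p.2)
      = Set.indicator {p : ℝ × ℝ | 0 < p.2 ∧ p.2 ≤ g p.1} (fun _ => (1 : ℝ)) := by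
    funext p
    by_cases hp : 0 < p.2 ∧ p.2 ≤ g p.1
    · simp [indf, Set.indicator, Set.mem_Ioc, hp.1, hp.2, hp]
    · simp only [Set.indicator, Set.mem_Ioc, Set.mem_setOf_eq, if_neg hp, indf]
  rw [h]
  apply measurable_const.indicator
  have : {p : ℝ × ℝ | 0 < p.2 ∧ p.2 ≤ g p.1}
      = {p : ℝ × ℝ | 0 < p.2} ∩ {p : ℝ × ℝ | p.2 ≤ g p.1} := rfl
  rw [this]
  exact (measurableSet_lt measurable_const measurable_snd).inter
    (measurableSet_le measurable_snd (hg.measurable.comp measurable_fst))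

lemma curveIntegral_eq_indicator (B : SmoothMovingBoundary) (τ L : ℝ)
    (hτL : B.len τ ≤ L) (g : E2 → ℝ) :
    B.curveIntegral τ g = ∫ s in Set.Ioc 0 L, indf (B.len τ) s * g (B.γ τ s) := by
  have h : ∀ s, indf (B.len τ) s * g (B.γ τ s)
      = (Set.Ioc 0 (B.len τ)).indicator (fun s => g (B.γ τ s)) s := by
    intro s
    unfold indf
    by_cases hs : s ∈ Set.Ioc 0 (B.len τ) <;> simp [hs]
  simp only [h]
  rw [setIntegral_indicator measurableSet_Ioc,
    Set.inter_eq_self_of_subset_right (Set.Ioc_subset_Ioc_right hτL)]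
  rfl

def PhiF (B : SmoothMovingBoundary) (σ : E2 → ℝ → ℝ) (t : ℝ) (z : E2) (p : ℝ × ℝ) : ℝ :=
  indf (B.len p.1) p.2 *
    (heatKernel (z - B.γ p.1 p.2) (t - p.1) * σ (B.γ p.1 p.2) p.1)

def GFf (B : SmoothMovingBoundary) (σ : E2 → ℝ → ℝ) (t δ : ℝ) (x : E2) (p : ℝ × ℝ) : ℝ :=
  indf (B.len p.1) p.2 *
    (heatKernel (x - B.γ p.1 p.2) (t + δ - p.1) * σ (B.γ p.1 p.2) p.1)

end Helpers

theorem singleLayer_far_history_recurrence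
    (T : ℝ) (B : SmoothMovingBoundary)
    (σ : E2 → ℝ → ℝ) (hσ : ContinuousDensity B T σ)
    (δ t : ℝ) (hδ : 0 < δ) (ht : 2 * δ ≤ t) (htT : t ≤ T) :
    ∀ x : E2,
      (∫ τ in Set.Ioc 0 (t - δ), B.curveIntegral τ fun y =>
        heatKernel (x - y) (t + δ - τ) * σ y τ) =
      ∫ z : E2, heatKernel (x - z) δ *
        ((∫ τ in Set.Ioc 0 (t - 2 * δ), B.curveIntegral τ fun y =>
            heatKernel (z - y) (t - τ) * σ y τ) +
          ∫ τ in Set.Ioc (t - 2 * δ) (t - δ), B.curveIntegral τ fun y =>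
            heatKernel (z - y) (t - τ) * σ y τ) := by
  intro x
  have hπ := Real.pi_pos
  have htδ : 0 < t - δ := by linarith
  have hAsub : Set.Ioc (0:ℝ) (t - δ) ⊆ Set.Icc 0 T := fun τ hτ =>
    ⟨hτ.1.le, by have := hτ.2; linarith⟩
  have hT0 : (0:ℝ) ≤ T := by linarith
  obtain ⟨L, hLb⟩ := (isCompact_Icc (a := (0:ℝ)) (b := T)).exists_bound_of_continuousOn
    B.len_cont.continuousOn
  have hlen : ∀ τ ∈ Set.Icc (0:ℝ) T, B.len τ ≤ L := fun τ h => (le_abs_self _).trans (hLb τ h)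
  have hL0 : 0 < L := lt_of_lt_of_le (B.len_pos 0) (hlen 0 ⟨le_refl 0, hT0⟩)
  have hecont : Continuous (fun p : ℝ × ℝ => ((B.γ p.1 p.2, p.1) : E2 × ℝ)) :=
    B.joint_cont.prodMk continuous_fst
  have hmemΓ : ∀ τ s, B.γ τ s ∈ frontier (B.Ω τ) := fun τ s => by
    rw [B.image_eq]; exact ⟨s, rfl⟩
  have hcσ : ContinuousOn (fun p : ℝ × ℝ => σ (B.γ p.1 p.2) p.1)
      (Set.Icc 0 T ×ˢ (Set.univ : Set ℝ)) :=
    hσ.comp hecont.continuousOn (fun p hp => ⟨hp.1, hmemΓ _ _⟩)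
  obtain ⟨M, hM⟩ := ((isCompact_Icc (a := (0:ℝ)) (b := T)).prod
      (isCompact_Icc (a := (0:ℝ)) (b := L))).exists_bound_of_continuousOn
    (hcσ.mono (fun p hp => ⟨hp.1, trivial⟩))
  have hM0 : 0 ≤ M := (norm_nonneg _).trans (hM (0, 0) ⟨⟨le_refl _, hT0⟩, ⟨le_refl _, hL0.le⟩⟩)
  have hν_eq : ((volume : Measure ℝ).restrict (Set.Ioc 0 (t - δ))).prod
        ((volume : Measure ℝ).restrict (Set.Ioc 0 L))
      = ((volume : Measure ℝ).prod volume).restrict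
        (Set.Ioc 0 (t - δ) ×ˢ Set.Ioc 0 L) := Measure.prod_restrict _ _
  haveI hfin1 : IsFiniteMeasure ((volume : Measure ℝ).restrict (Set.Ioc 0 (t - δ))) :=
    ⟨by rw [Measure.restrict_apply_univ]; exact measure_Ioc_lt_top⟩
  haveI hfin2 : IsFiniteMeasure ((volume : Measure ℝ).restrict (Set.Ioc 0 L)) :=
    ⟨by rw [Measure.restrict_apply_univ]; exact measure_Ioc_lt_top⟩
  have hprod_eq : (volume : Measure E2).prod
        (((volume : Measure ℝ).restrict (Set.Ioc 0 (t - δ))).prod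
          ((volume : Measure ℝ).restrict (Set.Ioc 0 L)))
      = ((volume : Measure E2).prod ((volume : Measure ℝ).prod volume)).restrict
        (Set.univ ×ˢ (Set.Ioc 0 (t - δ) ×ˢ Set.Ioc 0 L)) := by
    rw [← Measure.prod_restrict Set.univ (Set.Ioc 0 (t - δ) ×ˢ Set.Ioc 0 L),
      Measure.restrict_univ, hν_eq]
  -- measurability of the σ-factor
  have hσν : AEStronglyMeasurable (fun p : ℝ × ℝ => σ (B.γ p.1 p.2) p.1)
      (((volume : Measure ℝ).restrict (Set.Ioc 0 (t - δ))).prod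
        ((volume : Measure ℝ).restrict (Set.Ioc 0 L))) := by
    rw [hν_eq]
    exact (hcσ.mono (fun p hp => ⟨hAsub hp.1, trivial⟩)).aestronglyMeasurable
      (measurableSet_Ioc.prod measurableSet_Ioc)
  have hΦm : ∀ z : E2, AEStronglyMeasurable (fun p : ℝ × ℝ => PhiF B σ t z p)
      (((volume : Measure ℝ).restrict (Set.Ioc 0 (t - δ))).prod
        ((volume : Measure ℝ).restrict (Set.Ioc 0 L))) := by
    intro z
    exact ((indf_meas B.len_cont).aestronglyMeasurable).mul
      (((measurable_heatKernel_comp (measurable_const.sub B.joint_cont.measurable)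
        (measurable_const.sub measurable_fst)).aestronglyMeasurable).mul hσν)
  -- integrability of G
  have hGi : Integrable (fun p : ℝ × ℝ => GFf B σ t δ x p)
      (((volume : Measure ℝ).restrict (Set.Ioc 0 (t - δ))).prod
        ((volume : Measure ℝ).restrict (Set.Ioc 0 L))) := by
    apply Integrable.mono' (g := fun _ => 1 * (1 / (4 * Real.pi * δ) * M)) (integrable_const _)
    · exact ((indf_meas B.len_cont).aestronglyMeasurable).mul
        (((measurable_heatKernel_comp (measurable_const.sub B.joint_cont.measurable)
          (measurable_const.sub measurable_fst)).aestronglyMeasurable).mul hσν)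
    · have hmem : ∀ᵐ p ∂(((volume : Measure ℝ).restrict (Set.Ioc 0 (t - δ))).prod
          ((volume : Measure ℝ).restrict (Set.Ioc 0 L))),
          p ∈ Set.Ioc (0:ℝ) (t - δ) ×ˢ Set.Ioc (0:ℝ) L := by
        rw [hν_eq]; exact ae_restrict_mem (measurableSet_Ioc.prod measurableSet_Ioc)
      filter_upwards [hmem] with p hp
      have hτ2 : p.1 ≤ t - δ := hp.1.2
      have hheat_le : heatKernel (x - B.γ p.1 p.2) (t + δ - p.1) ≤ 1 / (4 * Real.pi * δ) :=
        heatKernel_le hδ (by linarith) _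
      have hheat0 : 0 ≤ heatKernel (x - B.γ p.1 p.2) (t + δ - p.1) :=
        heatKernel_nonneg (by linarith) _
      have hσb : ‖σ (B.γ p.1 p.2) p.1‖ ≤ M := hM p ⟨hAsub hp.1, ⟨hp.2.1.le, hp.2.2⟩⟩
      rw [Real.norm_eq_abs]
      unfold GFf
      calc |indf (B.len p.1) p.2 *
            (heatKernel (x - B.γ p.1 p.2) (t + δ - p.1) * σ (B.γ p.1 p.2) p.1)|
          = indf (B.len p.1) p.2 *
            (heatKernel (x - B.γ p.1 p.2) (t + δ - p.1) * |σ (B.γ p.1 p.2) p.1|) := by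
            rw [abs_mul, abs_mul, abs_of_nonneg (indf_nonneg _ _), abs_of_nonneg hheat0]
        _ ≤ 1 * (1 / (4 * Real.pi * δ) * M) := by
            apply mul_le_mul (indf_le_one _ _) ?_ (by positivity) zero_le_one
            exact mul_le_mul hheat_le hσb (abs_nonneg _) (by positivity)
  -- integrability of F on the product
  have hFi : Integrable (fun q : E2 × (ℝ × ℝ) => heatKernel (x - q.1) δ * PhiF B σ t q.1 q.2)
      ((volume : Measure E2).prod
        (((volume : Measure ℝ).restrict (Set.Ioc 0 (t - δ))).prod
          ((volume : Measure ℝ).restrict (Set.Ioc 0 L)))) := by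
    apply Integrable.mono'
      (g := fun q : E2 × (ℝ × ℝ) => heatKernel (x - q.1) δ * (1 * (1 / (4 * Real.pi * δ) * M)))
    · exact (integrable_heatKernel hδ x).mul_prod (integrable_const _)
    · apply AEStronglyMeasurable.mul
      · exact (measurable_heatKernel_comp (measurable_const.sub measurable_fst)
          measurable_const).aestronglyMeasurable
      · unfold PhiF
        apply AEStronglyMeasurable.mul
        · exact (((indf_meas B.len_cont).comp measurable_snd)).aestronglyMeasurable
        · apply AEStronglyMeasurable.mul
          · exact (measurable_heatKernel_comp
              (measurable_fst.sub (B.joint_cont.measurable.comp measurable_snd))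
              (measurable_const.sub (measurable_fst.comp measurable_snd))).aestronglyMeasurable
          · rw [hprod_eq]
            exact (hcσ.comp continuous_snd.continuousOn
                (fun q hq => ⟨hAsub hq.2.1, trivial⟩)).aestronglyMeasurable
              (MeasurableSet.univ.prod (measurableSet_Ioc.prod measurableSet_Ioc))
    · have hmem2 : ∀ᵐ q ∂((volume : Measure E2).prod
          (((volume : Measure ℝ).restrict (Set.Ioc 0 (t - δ))).prod
            ((volume : Measure ℝ).restrict (Set.Ioc 0 L)))),
          q.2 ∈ Set.Ioc (0:ℝ) (t - δ) ×ˢ Set.Ioc (0:ℝ) L := by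
        rw [hprod_eq]
        filter_upwards [ae_restrict_mem
          (MeasurableSet.univ.prod (measurableSet_Ioc.prod measurableSet_Ioc))] with q hq
        exact hq.2
      filter_upwards [hmem2] with q hq
      have hτ2 : q.2.1 ≤ t - δ := hq.1.2
      have h1 : 0 ≤ heatKernel (x - q.1) δ := heatKernel_nonneg hδ _
      have hheat_le : heatKernel (q.1 - B.γ q.2.1 q.2.2) (t - q.2.1) ≤ 1 / (4 * Real.pi * δ) :=
        heatKernel_le hδ (by linarith) _
      have hheat0 : 0 ≤ heatKernel (q.1 - B.γ q.2.1 q.2.2) (t - q.2.1) :=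
        heatKernel_nonneg (by linarith) _
      have hσb : ‖σ (B.γ q.2.1 q.2.2) q.2.1‖ ≤ M := hM q.2 ⟨hAsub hq.1, ⟨hq.2.1.le, hq.2.2⟩⟩
      rw [Real.norm_eq_abs]
      unfold PhiF
      rw [abs_mul, abs_of_nonneg h1]
      apply mul_le_mul_of_nonneg_left ?_ h1
      calc |indf (B.len q.2.1) q.2.2 *
            (heatKernel (q.1 - B.γ q.2.1 q.2.2) (t - q.2.1) * σ (B.γ q.2.1 q.2.2) q.2.1)|
          = indf (B.len q.2.1) q.2.2 *
            (heatKernel (q.1 - B.γ q.2.1 q.2.2) (t - q.2.1) * |σ (B.γ q.2.1 q.2.2) q.2.1|) := by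
            rw [abs_mul, abs_mul, abs_of_nonneg (indf_nonneg _ _), abs_of_nonneg hheat0]
        _ ≤ 1 * (1 / (4 * Real.pi * δ) * M) := by
            apply mul_le_mul (indf_le_one _ _) ?_ (by positivity) zero_le_one
            exact mul_le_mul hheat_le hσb (abs_nonneg _) (by positivity)
  -- Step 1: the left-hand side equals ∫ G dν
  have key1 : (∫ τ in Set.Ioc 0 (t - δ), B.curveIntegral τ fun y =>
        heatKernel (x - y) (t + δ - τ) * σ y τ)
      = ∫ p, GFf B σ t δ x p
          ∂(((volume : Measure ℝ).restrict (Set.Ioc 0 (t - δ))).prod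
            ((volume : Measure ℝ).restrict (Set.Ioc 0 L))) := by
    rw [integral_prod _ hGi]
    exact setIntegral_congr_fun measurableSet_Ioc
      (fun τ hτ => curveIntegral_eq_indicator B τ L (hlen τ (hAsub hτ)) _)
  -- Step 2: the right-hand side equals ∫ G dν
  have key2 : (∫ z : E2, heatKernel (x - z) δ *
        ((∫ τ in Set.Ioc 0 (t - 2 * δ), B.curveIntegral τ fun y =>
            heatKernel (z - y) (t - τ) * σ y τ) +
          ∫ τ in Set.Ioc (t - 2 * δ) (t - δ), B.curveIntegral τ fun y =>
            heatKernel (z - y) (t - τ) * σ y τ))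
      = ∫ p, GFf B σ t δ x p
          ∂(((volume : Measure ℝ).restrict (Set.Ioc 0 (t - δ))).prod
            ((volume : Measure ℝ).restrict (Set.Ioc 0 L))) := by
    have step1 : ∀ᵐ z ∂(volume : Measure E2),
        heatKernel (x - z) δ *
          ((∫ τ in Set.Ioc 0 (t - 2 * δ), B.curveIntegral τ fun y =>
              heatKernel (z - y) (t - τ) * σ y τ) +
            ∫ τ in Set.Ioc (t - 2 * δ) (t - δ), B.curveIntegral τ fun y =>
              heatKernel (z - y) (t - τ) * σ y τ)
        = ∫ p, heatKernel (x - z) δ * PhiF B σ t z p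
            ∂(((volume : Measure ℝ).restrict (Set.Ioc 0 (t - δ))).prod
              ((volume : Measure ℝ).restrict (Set.Ioc 0 L))) := by
      filter_upwards [hFi.prod_right_ae] with z hFz
      have hc0 : 0 < heatKernel (x - z) δ := heatKernel_pos hδ _
      have hΦz : Integrable (fun p : ℝ × ℝ => PhiF B σ t z p)
          (((volume : Measure ℝ).restrict (Set.Ioc 0 (t - δ))).prod
            ((volume : Measure ℝ).restrict (Set.Ioc 0 L))) := by
        have h2 := hFz.const_mul (heatKernel (x - z) δ)⁻¹
        exact h2.congr (Filter.Eventually.of_forall fun p => by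
          exact inv_mul_cancel_left₀ hc0.ne' _)
      have hhz : Integrable (fun τ => ∫ s, PhiF B σ t z (τ, s)
            ∂((volume : Measure ℝ).restrict (Set.Ioc 0 L)))
          ((volume : Measure ℝ).restrict (Set.Ioc 0 (t - δ))) :=
        hΦz.integral_prod_left
      have hk_eq : ∀ τ ∈ Set.Ioc (0:ℝ) (t - δ),
          (B.curveIntegral τ fun y => heatKernel (z - y) (t - τ) * σ y τ)
          = ∫ s in Set.Ioc (0:ℝ) L, PhiF B σ t z (τ, s) := fun τ hτ =>
        curveIntegral_eq_indicator B τ L (hlen τ (hAsub hτ)) _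
      have hkint : IntegrableOn
          (fun τ => B.curveIntegral τ fun y => heatKernel (z - y) (t - τ) * σ y τ)
          (Set.Ioc 0 (t - δ)) volume := by
        apply hhz.congr
        rw [Filter.EventuallyEq, ae_restrict_iff' measurableSet_Ioc]
        exact Filter.Eventually.of_forall fun τ hτ => (hk_eq τ hτ).symm
      have hsplit : (∫ τ in Set.Ioc 0 (t - 2 * δ), B.curveIntegral τ fun y =>
              heatKernel (z - y) (t - τ) * σ y τ) +
            (∫ τ in Set.Ioc (t - 2 * δ) (t - δ), B.curveIntegral τ fun y =>
              heatKernel (z - y) (t - τ) * σ y τ)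
          = ∫ τ in Set.Ioc 0 (t - δ), B.curveIntegral τ fun y =>
              heatKernel (z - y) (t - τ) * σ y τ := by
        rw [← setIntegral_union (Set.Ioc_disjoint_Ioc_of_le le_rfl) measurableSet_Ioc
          (hkint.mono_set (Set.Ioc_subset_Ioc_right (by linarith)))
          (hkint.mono_set (Set.Ioc_subset_Ioc_left (by linarith))),
          Set.Ioc_union_Ioc_eq_Ioc (by linarith) (by linarith)]
      rw [hsplit, setIntegral_congr_fun measurableSet_Ioc hk_eq,
        ← integral_prod _ hΦz, ← integral_const_mul]
    rw [integral_congr_ae step1,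
      integral_integral_swap (f := fun (z : E2) (p : ℝ × ℝ) =>
        heatKernel (x - z) δ * PhiF B σ t z p) hFi]
    apply integral_congr_ae
    have hmem : ∀ᵐ p ∂(((volume : Measure ℝ).restrict (Set.Ioc 0 (t - δ))).prod
        ((volume : Measure ℝ).restrict (Set.Ioc 0 L))),
        p ∈ Set.Ioc (0:ℝ) (t - δ) ×ˢ Set.Ioc (0:ℝ) L := by
      rw [hν_eq]; exact ae_restrict_mem (measurableSet_Ioc.prod measurableSet_Ioc)
    filter_upwards [hmem] with p hp
    have hts : 0 < t - p.1 := by have := hp.1.2; linarith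
    have hrw : ∀ z : E2, heatKernel (x - z) δ * PhiF B σ t z p
        = (indf (B.len p.1) p.2 * σ (B.γ p.1 p.2) p.1) *
          (heatKernel (x - z) δ * heatKernel (z - B.γ p.1 p.2) (t - p.1)) := by
      intro z; unfold PhiF; ring
    simp only [hrw]
    rw [integral_const_mul, heatKernel_conv hδ hts]
    have h5 : δ + (t - p.1) = t + δ - p.1 := by ring
    rw [h5]
    unfold GFf
    ring
  exact key1.trans key2.symm


end
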